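/- Let r ∈ ℕ and a, b ∈ ℝ satisfy r(r−1) + a·r + b = 0 (with r cast to ℝ). Define u : ℕ → ℝ by u_n = ∏_{j=0}^{r−1} (n − j) (so that u_n = n!/(n−r)! for n ≥ r and u_n = 0 for n < r). Then u is an exact solution of the discrete Euler equation: for every natural number n ≥ 2, (n² + (a−1)n + b)·u_n − n(a + 2n − 2)·u_{n−1} + n(n−1)·u_{n−2} = 0. -/

import Mathlib

lemma key_prod (r : ℕ) (x : ℝ) :
    x * ∏ j ∈ Finset.range r, (x - 1 - (j : ℝ))
      = (x - r) * ∏ j ∈ Finset.range r, (x - (j : ℝ)) := by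
  have h1 : ∏ j ∈ Finset.range (r + 1), (x - (j : ℝ))
      = (∏ j ∈ Finset.range r, (x - ((j + 1 : ℕ) : ℝ))) * (x - ((0:ℕ) : ℝ)) :=
    Finset.prod_range_succ' (fun j => x - (j : ℝ)) r
  have h2 : ∏ j ∈ Finset.range (r + 1), (x - (j : ℝ))
      = (∏ j ∈ Finset.range r, (x - (j : ℝ))) * (x - (r : ℝ)) :=
    Finset.prod_range_succ (fun j => x - (j : ℝ)) r
  have h3 : (∏ j ∈ Finset.range r, (x - 1 - (j : ℝ)))
      = ∏ j ∈ Finset.range r, (x - ((j + 1 : ℕ) : ℝ)) := by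
    apply Finset.prod_congr rfl; intro j _; push_cast; ring
  rw [h3]
  push_cast at h1 h2 ⊢
  linear_combination h2 - h1

/-- If `r ∈ ℕ` is a root of the indicial polynomial `r(r-1)+ar+b`, then
`u_n = ∏_{j=0}^{r-1} (n - j)` is an exact solution of the discrete Euler equation. -/
theorem stmt_11 (r : ℕ) (a b : ℝ)
    (hroot : (r : ℝ) * ((r : ℝ) - 1) + a * r + b = 0)
    (u : ℕ → ℝ)
    (hu : ∀ n : ℕ, u n = ∏ j ∈ Finset.range r, ((n : ℝ) - (j : ℝ))) :
    ∀ n : ℕ, 2 ≤ n →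
      ((n : ℝ) ^ 2 + (a - 1) * n + b) * u n
        - (n : ℝ) * (a + 2 * n - 2) * u (n - 1)
        + (n : ℝ) * ((n : ℝ) - 1) * u (n - 2) = 0 := by
  intro n hn
  have hc1 : ((n - 1 : ℕ) : ℝ) = (n : ℝ) - 1 := by
    have : 1 ≤ n := by omega
    push_cast [this]; ring
  have hc2 : ((n - 2 : ℕ) : ℝ) = (n : ℝ) - 2 := by
    push_cast [hn]; ring
  have h1 : (n : ℝ) * u (n - 1) = ((n : ℝ) - r) * u n := by
    rw [hu, hu, hc1]
    have := key_prod r (n : ℝ)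
    convert this using 3 <;> ring
  have h2 : ((n : ℝ) - 1) * u (n - 2) = ((n : ℝ) - 1 - r) * u (n - 1) := by
    rw [hu, hu, hc1, hc2]
    have := key_prod r ((n : ℝ) - 1)
    convert this using 3 <;> ring
  linear_combination (n : ℝ) * h2 + ((n : ℝ) - 1 - r - (a + 2 * n - 2)) * h1
    + (u n) * hroot
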